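/- Let R be a Hecke symmetry on V⊗V with parameter q (q ∈ ℂ, q ≠ ±1, q ≠ 0). For u ≠ v define the trigonometric current R-matrix R(u,v) := R − (q−q⁻¹)·u·(u−v)⁻¹·I. Then R(u,v) satisfies the quantum Yang–Baxter equation with spectral parameters: R₁₂(u,v)·R₂₃(u,w)·R₁₂(v,w) = R₂₃(v,w)·R₁₂(u,w)·R₂₃(u,v) as operators on V^{⊗3}, for all pairwise distinct u, v, w ∈ ℂ. -/
import Mathlib


open Matrix BigOperators

noncomputable section

/-- Operators on `V ⊗ V`, `V = ℂ^N`, identified with their matrices. -/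
abbrev Op2 (N : ℕ) := Matrix (Fin N × Fin N) (Fin N × Fin N) ℂ

/-- Operators on `V^{⊗n}`. -/
abbrev OpN (n N : ℕ) := Matrix (Fin n → Fin N) (Fin n → Fin N) ℂ

/-- Placement `B_{m+1, m+2}` (1-indexed), i.e. a two-leg operator `B` acting on the adjacent
legs `m, m+1` (0-indexed) of `V^{⊗n}`, identity elsewhere. -/
def adjPlace (n N : ℕ) (B : Op2 N) (m : ℕ) : OpN n N :=
  if h : m + 1 < n then
    Matrix.of fun x y =>
      B (x ⟨m, Nat.lt_of_succ_lt h⟩, x ⟨m + 1, h⟩) (y ⟨m, Nat.lt_of_succ_lt h⟩, y ⟨m + 1, h⟩) *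
        ∏ j : Fin n, if (j : ℕ) = m ∨ (j : ℕ) = m + 1 then 1 else (if x j = y j then 1 else 0)
  else 1

namespace YBEaux

variable {n N : ℕ}

def E (m : ℕ) (x y : Fin n → Fin N) : Prop :=
  ∀ j : Fin n, ¬((j:ℕ) = m ∨ (j:ℕ) = m + 1) → x j = y j

instance (m : ℕ) (x y : Fin n → Fin N) : Decidable (E m x y) := by unfold E; infer_instance

lemma E_refl (m : ℕ) (x : Fin n → Fin N) : E m x x := fun _ _ => rfl

lemma E_trans {m : ℕ} {x y z : Fin n → Fin N} (h1 : E m x y) (h2 : E m y z) : E m x z :=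
  fun j hj => (h1 j hj).trans (h2 j hj)

lemma adjPlace_apply {m : ℕ} (h : m + 1 < n) (B : Op2 N) (x y : Fin n → Fin N) :
    adjPlace n N B m x y =
      B (x ⟨m, Nat.lt_of_succ_lt h⟩, x ⟨m + 1, h⟩) (y ⟨m, Nat.lt_of_succ_lt h⟩, y ⟨m + 1, h⟩) *
        if E m x y then 1 else 0 := by
  rw [adjPlace, dif_pos h, Matrix.of_apply]
  congr 1
  have hfac : ∀ j : Fin n,
      (if (j:ℕ) = m ∨ (j:ℕ) = m + 1 then (1:ℂ) else if x j = y j then 1 else 0)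
        = if ¬((j:ℕ) = m ∨ (j:ℕ) = m + 1) → x j = y j then 1 else 0 := by
    intro j
    by_cases hc : (j:ℕ) = m ∨ (j:ℕ) = m + 1 <;> by_cases hd : x j = y j <;> simp [hc, hd]
  simp_rw [hfac, Fintype.prod_boole]
  simp [E]

lemma eq_iff {m : ℕ} (h : m + 1 < n) (x y : Fin n → Fin N) :
    x = y ↔ ((x ⟨m, Nat.lt_of_succ_lt h⟩, x ⟨m + 1, h⟩) =
      (y ⟨m, Nat.lt_of_succ_lt h⟩, y ⟨m + 1, h⟩)) ∧ E m x y := by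
  constructor
  · rintro rfl; exact ⟨rfl, E_refl m _⟩
  · rintro ⟨hp, hE⟩
    simp only [Prod.mk.injEq] at hp
    obtain ⟨hp1, hp2⟩ := hp
    funext j
    by_cases hj : (j:ℕ) = m ∨ (j:ℕ) = m + 1
    · rcases hj with hj | hj
      · have hjj : j = ⟨m, Nat.lt_of_succ_lt h⟩ := Fin.ext hj
        rw [hjj]; exact hp1
      · have hjj : j = ⟨m + 1, h⟩ := Fin.ext hj
        rw [hjj]; exact hp2
    · exact hE j hj

lemma adjPlace_one {m : ℕ} (h : m + 1 < n) : adjPlace n N (1 : Op2 N) m = 1 := by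
  ext x y
  rw [adjPlace_apply h, Matrix.one_apply, Matrix.one_apply]
  by_cases hp : (x ⟨m, Nat.lt_of_succ_lt h⟩, x ⟨m + 1, h⟩) =
      (y ⟨m, Nat.lt_of_succ_lt h⟩, y ⟨m + 1, h⟩) <;> by_cases hE : E m x y <;>
    simp [eq_iff h x y, hp, hE]

lemma adjPlace_smul {m : ℕ} (h : m + 1 < n) (c : ℂ) (B : Op2 N) :
    adjPlace n N (c • B) m = c • adjPlace n N B m := by
  ext x y
  rw [Matrix.smul_apply, adjPlace_apply h, adjPlace_apply h, Matrix.smul_apply, smul_eq_mul,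
    smul_eq_mul]
  ring

lemma adjPlace_add {m : ℕ} (h : m + 1 < n) (B C : Op2 N) :
    adjPlace n N (B + C) m = adjPlace n N B m + adjPlace n N C m := by
  ext x y
  rw [Matrix.add_apply, adjPlace_apply h, adjPlace_apply h, adjPlace_apply h, Matrix.add_apply]
  ring

lemma adjPlace_sub {m : ℕ} (h : m + 1 < n) (B C : Op2 N) :
    adjPlace n N (B - C) m = adjPlace n N B m - adjPlace n N C m := by
  ext x y
  rw [Matrix.sub_apply, adjPlace_apply h, adjPlace_apply h, adjPlace_apply h, Matrix.sub_apply]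
  ring

lemma adjPlace_mul {m : ℕ} (h : m + 1 < n) (B C : Op2 N) :
    adjPlace n N (B * C) m = adjPlace n N B m * adjPlace n N C m := by
  ext x y
  rw [Matrix.mul_apply, adjPlace_apply h, Matrix.mul_apply]
  simp_rw [adjPlace_apply h]
  by_cases hE : E m x y
  · rw [if_pos hE, mul_one]
    symm
    rw [← Finset.sum_filter_of_ne (p := fun z => E m x z)
      (fun z _ hz => by
        by_cases h1 : E m x z
        · exact h1
        · exact absurd (by simp [h1]) hz)]
    refine Finset.sum_bij' (i := fun z _ => (z ⟨m, Nat.lt_of_succ_lt h⟩, z ⟨m + 1, h⟩))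
      (j := fun p _ => fun j : Fin n =>
        if (j:ℕ) = m then p.1 else if (j:ℕ) = m + 1 then p.2 else x j)
      (fun z hz => Finset.mem_univ _) (fun p _ => ?_) (fun z hz => ?_) (fun p _ => ?_)
      (fun z hz => ?_)
    · rw [Finset.mem_filter]
      refine ⟨Finset.mem_univ _, fun j hj => ?_⟩
      push_neg at hj
      simp [hj.1, hj.2]
    · rw [Finset.mem_filter] at hz
      funext j
      by_cases hj1 : (j:ℕ) = m
      · have : j = ⟨m, Nat.lt_of_succ_lt h⟩ := Fin.ext hj1
        simp [hj1, this]
      · by_cases hj2 : (j:ℕ) = m + 1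
        · have : j = ⟨m + 1, h⟩ := Fin.ext hj2
          simp [hj1, hj2, this]
        · simp only [hj1, hj2, if_false]
          exact hz.2 j (by push_neg; exact ⟨hj1, hj2⟩)
    · have hm : ((⟨m, Nat.lt_of_succ_lt h⟩ : Fin n) : ℕ) = m := rfl
      have hm1 : ((⟨m + 1, h⟩ : Fin n) : ℕ) = m + 1 := rfl
      simp [hm, hm1, Nat.succ_ne_self]
    · rw [Finset.mem_filter] at hz
      have h1 : E m x z := hz.2
      have h2 : E m z y := fun j hj => (h1 j hj).symm.trans (hE j hj)
      rw [if_pos h1, if_pos h2, mul_one, mul_one]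
  · rw [if_neg hE, mul_zero]
    symm
    apply Finset.sum_eq_zero
    intro z _
    by_cases h1 : E m x z
    · have h2 : ¬ E m z y := fun h2 => hE (E_trans h1 h2)
      simp [h2]
    · simp [h1]

end YBEaux

set_option maxHeartbeats 1600000 in
/-- if `R` is a Hecke symmetry with parameter `q` (`q ≠ ±1`, `q ≠ 0`), then the
trigonometric current `R`-matrix `R(u,v) = R - (q-q⁻¹) u (u-v)⁻¹ I` satisfies the quantum
Yang–Baxter equation with spectral parameters on `V^{⊗3}`. -/
theorem stmt_1 (N : ℕ) (hN : 1 ≤ N) (R : Op2 N) (q : ℂ)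
    (hq1 : q ≠ 1) (hq2 : q ≠ -1) (hq0 : q ≠ 0)
    (hbraid : adjPlace 3 N R 0 * adjPlace 3 N R 1 * adjPlace 3 N R 0 =
      adjPlace 3 N R 1 * adjPlace 3 N R 0 * adjPlace 3 N R 1)
    (hHecke : (R - q • 1) * (R + q⁻¹ • 1) = 0)
    (u v w : ℂ) (huv : u ≠ v) (huw : u ≠ w) (hvw : v ≠ w) :
    adjPlace 3 N (R - ((q - q⁻¹) * u * (u - v)⁻¹) • 1) 0 *
        adjPlace 3 N (R - ((q - q⁻¹) * u * (u - w)⁻¹) • 1) 1 *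
        adjPlace 3 N (R - ((q - q⁻¹) * v * (v - w)⁻¹) • 1) 0 =
      adjPlace 3 N (R - ((q - q⁻¹) * v * (v - w)⁻¹) • 1) 1 *
        adjPlace 3 N (R - ((q - q⁻¹) * u * (u - w)⁻¹) • 1) 0 *
        adjPlace 3 N (R - ((q - q⁻¹) * u * (u - v)⁻¹) • 1) 1 := by
  have h0 : (0 : ℕ) + 1 < 3 := by norm_num
  have h1 : (1 : ℕ) + 1 < 3 := by norm_num
  set t : ℂ := q - q⁻¹ with ht
  set a : ℂ := t * u * (u - v)⁻¹ with ha
  set b : ℂ := t * u * (u - w)⁻¹ with hb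
  set c : ℂ := t * v * (v - w)⁻¹ with hc
  set A : OpN 3 N := adjPlace 3 N R 0 with hA
  set B : OpN 3 N := adjPlace 3 N R 1 with hB
  -- Hecke relation for R
  have hsq : R * R = t • R + 1 := by
    have h2 := hHecke
    simp only [sub_mul, mul_add, smul_mul_assoc, mul_smul_comm, one_mul, mul_one,
      smul_smul] at h2
    rw [smul_sub, smul_smul, inv_mul_cancel₀ hq0, one_smul] at h2
    -- h2 : R * R - q • R + (q⁻¹ • R - 1) = 0
    have h4 : R * R = t • R + 1 := by
      rw [ht, sub_smul]
      have h5 : R * R = R * R - q • R + (q⁻¹ • R - 1) + (q • R - q⁻¹ • R + 1) := by abel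
      rw [h5, h2, zero_add]
    exact h4
  have hA2 : A * A = t • A + 1 := by
    rw [hA, ← YBEaux.adjPlace_mul h0, hsq, YBEaux.adjPlace_add h0, YBEaux.adjPlace_smul h0,
      YBEaux.adjPlace_one h0]
  have hB2 : B * B = t • B + 1 := by
    rw [hB, ← YBEaux.adjPlace_mul h1, hsq, YBEaux.adjPlace_add h1, YBEaux.adjPlace_smul h1,
      YBEaux.adjPlace_one h1]
  -- scalar identity
  have huv' : u - v ≠ 0 := sub_ne_zero.mpr huv
  have huw' : u - w ≠ 0 := sub_ne_zero.mpr huw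
  have hvw' : v - w ≠ 0 := sub_ne_zero.mpr hvw
  have key : a * b + b * c - a * c = t * b := by
    rw [ha, hb, hc]
    field_simp
    ring
  -- rewrite the placements
  have place0 : ∀ s : ℂ, adjPlace 3 N (R - s • 1) 0 = A - s • 1 := fun s => by
    rw [YBEaux.adjPlace_sub h0, YBEaux.adjPlace_smul h0, YBEaux.adjPlace_one h0, hA]
  have place1 : ∀ s : ℂ, adjPlace 3 N (R - s • 1) 1 = B - s • 1 := fun s => by
    rw [YBEaux.adjPlace_sub h1, YBEaux.adjPlace_smul h1, YBEaux.adjPlace_one h1, hB]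
  simp only [place0, place1]
  -- now pure algebra
  have hbr : A * B * A = B * A * B := hbraid
  simp only [sub_mul, mul_sub, smul_mul_assoc, mul_smul_comm, one_mul, mul_one, smul_smul,
    smul_sub]
  rw [hA2, hB2, hbr]
  clear_value t a b c A B
  match_scalars
  all_goals try ring
  all_goals try linear_combination key
  all_goals try linear_combination -key
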